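/- arXiv:1607.07828 — 10 statements merged into one kernel-verified Lean document; each statement's English description precedes it below -/
import Mathlib

section
/- Let f : X → X be a permutation of a set X and W ⊆ X a finite subset. Define f|_W by f|_W(v) = f(v) if v ∈ W, and otherwise f|_W(v) = f^{-n}(v) where n ≥ 0 is minimal such that f^{-n}(v) ∉ f[W]. Then f|_W is well-defined (such an n exists for every v ∉ W) and is a bijection of X. -/
/-- The restriction of a permutation `f` to a finite subset `W`:
`f|_W v = f v` for `v ∈ W`, and otherwise `f|_W v = f⁻ⁿ v` for the minimal `n ≥ 0`
with `f⁻ⁿ v ∉ f[W]`. -/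
noncomputable def restrictPerm {X : Type*} [DecidableEq X] (f : Equiv.Perm X) (W : Finset X) :
    X → X :=
  fun v => if v ∈ W then f v
    else f.symm^[sInf {n : ℕ | f.symm^[n] v ∉ ⇑f '' (W : Set X)}] v

/-- If all positive iterates of `e` at `v` stay in the finite set `W`, then `v` is periodic. -/
lemma exists_period {X : Type*} (e : Equiv.Perm X) (W : Finset X) (v : X)
    (h : ∀ n : ℕ, e^[n+1] v ∈ W) : ∃ d : ℕ, 1 ≤ d ∧ e^[d] v = v := by
  obtain ⟨i, j, hne, hij⟩ :=
    Finite.exists_ne_map_eq_of_infinite (fun n : ℕ => (⟨e^[n+1] v, h n⟩ : W))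
  wlog hlt : i < j generalizing i j
  · exact this j i hne.symm hij.symm (by omega)
  have heq : e^[i+1] v = e^[j+1] v := congrArg Subtype.val hij
  have h2 : e^[i+1] (e^[j-i] v) = e^[i+1] v := by
    rw [← Function.iterate_add_apply, show i+1+(j-i) = j+1 by omega, ← heq]
  exact ⟨j - i, by omega, (e.injective.iterate (i+1)) h2⟩

lemma nonempty_S {X : Type*} [DecidableEq X] (f : Equiv.Perm X) (W : Finset X) {v : X}
    (hv : v ∉ W) : {n : ℕ | f.symm^[n] v ∉ ⇑f '' (W : Set X)}.Nonempty := by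
  by_contra h
  rw [Set.not_nonempty_iff_eq_empty] at h
  have hall0 : ∀ n : ℕ, f.symm^[n] v ∈ ⇑f '' (W : Set X) := fun n =>
    not_not.mp (Set.eq_empty_iff_forall_notMem.mp h n)
  have hall : ∀ n : ℕ, f.symm^[n+1] v ∈ W := by
    intro n
    obtain ⟨w, hw, hfw⟩ := hall0 n
    have : f.symm^[n+1] v = w := by
      rw [Function.iterate_succ_apply', ← hfw, Equiv.symm_apply_apply]
    rw [this]; exact hw
  obtain ⟨d, hd1, hdv⟩ := exists_period f.symm W v hall
  have : v ∈ W := by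
    have := hall (d - 1)
    rwa [show d - 1 + 1 = d by omega, hdv] at this
  exact hv this

/-- `f|_W` is well-defined (for every `v ∉ W` some `n` with `f⁻ⁿ v ∉ f[W]` exists)
and is a bijection of `X`. -/
theorem stmt0 {X : Type*} [DecidableEq X] (f : Equiv.Perm X) (W : Finset X) :
    (∀ v : X, v ∉ W → {n : ℕ | f.symm^[n] v ∉ ⇑f '' (W : Set X)}.Nonempty) ∧
    Function.Bijective (restrictPerm f W) := by
  have hLI : ∀ (k : ℕ) (x : X), f.symm^[k] (f^[k] x) = x := fun k x =>
    (Function.LeftInverse.iterate f.symm_apply_apply k) x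
  have hRI : ∀ (k : ℕ) (x : X), f^[k] (f.symm^[k] x) = x := fun k x =>
    (Function.LeftInverse.iterate f.apply_symm_apply k) x
  have hSne := fun (v : X) (hv : v ∉ W) => nonempty_S f W hv
  -- notation for the minimal index
  set S : X → Set ℕ := fun v => {n : ℕ | f.symm^[n] v ∉ ⇑f '' (W : Set X)} with hS
  have hg_out : ∀ v : X, v ∉ W → restrictPerm f W v = f.symm^[sInf (S v)] v := by
    intro v hv; simp [restrictPerm, hv, hS]
  have hg_in : ∀ v : X, v ∈ W → restrictPerm f W v = f v := by
    intro v hv; simp [restrictPerm, hv]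
  have hspec : ∀ v : X, v ∉ W → f.symm^[sInf (S v)] v ∉ ⇑f '' (W : Set X) := fun v hv =>
    Nat.sInf_mem (hSne v hv)
  have hmin : ∀ v : X, ∀ k : ℕ, k < sInf (S v) → f.symm^[k] v ∈ ⇑f '' (W : Set X) :=
    fun v k hk => not_not.mp (Nat.notMem_of_lt_sInf hk)
  -- key injectivity step
  have hkey : ∀ u v : X, u ∉ W → v ∉ W → sInf (S u) ≤ sInf (S v) →
      f.symm^[sInf (S u)] u = f.symm^[sInf (S v)] v → u = v := by
    intro u v hu hv hle heq
    set m := sInf (S u)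
    set n := sInf (S v)
    rcases eq_or_lt_of_le hle with hmn | hmn
    · exact f.symm.injective.iterate m (by rw [heq, hmn])
    · exfalso
      set z := f.symm^[n] v with hz
      have hvz : f.symm^[n - m - 1] v = f^[m+1] z := by
        have h1 : f.symm^[n] v = f.symm^[m+1] (f.symm^[n-m-1] v) := by
          rw [← Function.iterate_add_apply, show m+1+(n-m-1) = n by omega]
        have := congrArg (f^[m+1]) h1
        rw [hRI] at this
        rw [← this]
      have hmem : f^[m+1] z ∈ ⇑f '' (W : Set X) := by
        rw [← hvz]; exact hmin v (n - m - 1) (by omega)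
      obtain ⟨w, hw, hfw⟩ := hmem
      have huz : f^[m] z = u := by rw [← heq, hRI]
      have : u = w := by
        have h2 : f^[m+1] z = f (f^[m] z) := Function.iterate_succ_apply' f m z
        rw [huz] at h2
        have := congrArg f.symm (hfw.trans h2)
        simpa using this.symm
      rw [this] at hu; exact hu hw
  refine ⟨hSne, ?_, ?_⟩
  · -- injective
    intro u v huv
    by_cases hu : u ∈ W <;> by_cases hv : v ∈ W
    · rw [hg_in u hu, hg_in v hv] at huv; exact f.injective huv
    · exfalso
      rw [hg_in u hu, hg_out v hv] at huv
      exact hspec v hv (huv ▸ ⟨u, hu, rfl⟩)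
    · exfalso
      rw [hg_out u hu, hg_in v hv] at huv
      exact hspec u hu (huv.symm ▸ ⟨v, hv, rfl⟩)
    · rw [hg_out u hu, hg_out v hv] at huv
      rcases le_total (sInf (S u)) (sInf (S v)) with h | h
      · exact hkey u v hu hv h huv
      · exact (hkey v u hv hu h huv.symm).symm
  · -- surjective
    intro y
    by_cases hy : y ∈ ⇑f '' (W : Set X)
    · obtain ⟨w, hw, hfw⟩ := hy
      exact ⟨w, by rw [hg_in w hw]; exact hfw⟩
    · have hTne : {n : ℕ | f^[n] y ∉ W}.Nonempty := by
        by_contra h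
        rw [Set.not_nonempty_iff_eq_empty] at h
        have hall : ∀ n : ℕ, f^[n] y ∈ W := fun n =>
          not_not.mp (Set.eq_empty_iff_forall_notMem.mp h n)
        obtain ⟨d, hd1, hdy⟩ := exists_period f W y (fun n => hall (n+1))
        refine hy ⟨f^[d-1] y, hall (d-1), ?_⟩
        have h2 : (⇑f)^[d-1+1] y = y := by rwa [show d-1+1 = d by omega]
        rwa [Function.iterate_succ_apply'] at h2
      set n := sInf {n : ℕ | f^[n] y ∉ W} with hn
      have hvW : f^[n] y ∉ W := Nat.sInf_mem hTne
      have hTmin : ∀ k : ℕ, k < n → f^[k] y ∈ W := fun k hk =>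
        not_not.mp (Nat.notMem_of_lt_sInf hk)
      set v := f^[n] y with hv
      have hnS : n ∈ S v := by
        show f.symm^[n] v ∉ ⇑f '' (W : Set X)
        rw [hv, hLI]; exact hy
      have hSeq : sInf (S v) = n := by
        refine le_antisymm (Nat.sInf_le hnS) (le_csInf (hSne v hvW) ?_)
        intro k hk
        by_contra hkn
        push_neg at hkn
        apply hk
        show f.symm^[k] v ∈ ⇑f '' (W : Set X)
        have h1 : f.symm^[k] v = f^[n-k] y := by
          rw [hv, show n = k + (n - k) by omega, Function.iterate_add_apply, hLI,
            show k + (n-k) - k = n - k by omega]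
        rw [h1]
        refine ⟨f^[n-k-1] y, hTmin (n-k-1) (by omega), ?_⟩
        rw [show n - k = n - k - 1 + 1 by omega, Function.iterate_succ_apply']
        simp
      refine ⟨v, ?_⟩
      rw [hg_out v hvW, hSeq, hv, hLI]
end

section
/- Let f : X → X be a permutation and W ⊆ X finite, and let f|_W be the restriction of f to W as defined above. Then f|_W is a finite permutation, i.e., f|_W(v) = v for all v outside the finite set W ∪ f[W]. -/
section aux
variable {X : Type*} [DecidableEq X] (f : Equiv.Perm X) (W : Finset X)

omit [DecidableEq X] in
private lemma memimg {x : X} : x ∈ ⇑f '' (W : Set X) ↔ f.symm x ∈ W := by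
  rw [Set.mem_image_equiv]; simp

private lemma nonemptyA {v : X} (hv : v ∉ W) :
    {n : ℕ | (⇑f.symm)^[n] v ∉ ⇑f '' (W : Set X)}.Nonempty := by
  by_contra h
  rw [Set.not_nonempty_iff_eq_empty, Set.eq_empty_iff_forall_notMem] at h
  have hall : ∀ n : ℕ, (⇑f.symm)^[n] v ∈ ⇑f '' (W : Set X) := fun n => not_not.1 (h n)
  have h' : ∀ n : ℕ, (⇑f.symm)^[n + 1] v ∈ W := by
    intro n
    rw [Function.iterate_succ_apply']
    exact (memimg f W).1 (hall n)
  obtain ⟨i, j, hne, hEq⟩ :=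
    Finite.exists_ne_map_eq_of_infinite (fun n : ℕ => (⟨(⇑f.symm)^[n + 1] v, h' n⟩ : W))
  obtain ⟨i, j, hlt, heq⟩ : ∃ i j : ℕ, i < j ∧ (⇑f.symm)^[i + 1] v = (⇑f.symm)^[j + 1] v := by
    rcases hne.lt_or_gt with h | h
    · exact ⟨i, j, h, congrArg Subtype.val hEq⟩
    · exact ⟨j, i, h, (congrArg Subtype.val hEq).symm⟩
  set p := j - i with hp
  have h1 : (⇑f.symm)^[i + 1] ((⇑f.symm)^[p] v) = (⇑f.symm)^[i + 1] v := by
    rw [← Function.iterate_add_apply, show i + 1 + p = j + 1 from by omega]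
    exact heq.symm
  have h2 : (⇑f.symm)^[p] v = v := (f.symm.injective.iterate (i + 1)) h1
  obtain ⟨q, hq⟩ : ∃ q, p = q + 1 := ⟨p - 1, by omega⟩
  have : v ∈ W := by
    rw [← h2, hq, Function.iterate_succ_apply']
    exact (memimg f W).1 (hall q)
  exact hv this

private lemma nonemptyB {t : X} (ht : t ∈ W) (ht2 : t ∉ ⇑f '' (W : Set X)) :
    {n : ℕ | (⇑f)^[n + 1] t ∉ W}.Nonempty := by
  by_contra h
  rw [Set.not_nonempty_iff_eq_empty, Set.eq_empty_iff_forall_notMem] at h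
  have h' : ∀ n : ℕ, (⇑f)^[n] t ∈ W := by
    intro n
    match n with
    | 0 => exact ht
    | r + 1 => exact not_not.1 (h r)
  obtain ⟨i, j, hne, hEq⟩ :=
    Finite.exists_ne_map_eq_of_infinite (fun n : ℕ => (⟨(⇑f)^[n] t, h' n⟩ : W))
  obtain ⟨i, j, hlt, heq⟩ : ∃ i j : ℕ, i < j ∧ (⇑f)^[i] t = (⇑f)^[j] t := by
    rcases hne.lt_or_gt with h | h
    · exact ⟨i, j, h, congrArg Subtype.val hEq⟩
    · exact ⟨j, i, h, (congrArg Subtype.val hEq).symm⟩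
  set p := j - i with hp
  have h1 : (⇑f)^[i] ((⇑f)^[p] t) = (⇑f)^[i] t := by
    rw [← Function.iterate_add_apply, show i + p = j from by omega]
    exact heq.symm
  have h2 : (⇑f)^[p] t = t := (f.injective.iterate i) h1
  obtain ⟨q, hq⟩ : ∃ q, p = q + 1 := ⟨p - 1, by omega⟩
  apply ht2
  refine ⟨(⇑f)^[q] t, h' q, ?_⟩
  rw [hq, Function.iterate_succ_apply'] at h2
  exact h2

end aux

/-- The restriction `f|_W` is a finite permutation: it is a bijection and fixes every
element outside the finite set `W ∪ f[W]`. -/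
theorem stmt1 {X : Type*} [DecidableEq X] (f : Equiv.Perm X) (W : Finset X) :
    Function.Bijective (restrictPerm f W) ∧
    ∀ v : X, v ∉ (W : Set X) ∪ ⇑f '' (W : Set X) → restrictPerm f W v = v := by
  have hmem : ∀ v : X, v ∉ W →
      (⇑f.symm)^[sInf {n : ℕ | (⇑f.symm)^[n] v ∉ ⇑f '' (W : Set X)}] v ∉ ⇑f '' (W : Set X) :=
    fun v hv => Nat.sInf_mem (nonemptyA f W hv)
  have hlt : ∀ v : X, ∀ k, k < sInf {n : ℕ | (⇑f.symm)^[n] v ∉ ⇑f '' (W : Set X)} →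
      (⇑f.symm)^[k] v ∈ ⇑f '' (W : Set X) :=
    fun v k hk => not_not.1 (Nat.notMem_of_lt_sInf hk)
  have injaux : ∀ u v : X, u ∉ W → v ∉ W →
      sInf {n : ℕ | (⇑f.symm)^[n] u ∉ ⇑f '' (W : Set X)} ≤
        sInf {n : ℕ | (⇑f.symm)^[n] v ∉ ⇑f '' (W : Set X)} →
      (⇑f.symm)^[sInf {n : ℕ | (⇑f.symm)^[n] u ∉ ⇑f '' (W : Set X)}] u =
        (⇑f.symm)^[sInf {n : ℕ | (⇑f.symm)^[n] v ∉ ⇑f '' (W : Set X)}] v → u = v := by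
    intro u v hu hv hle heq
    set m := sInf {n : ℕ | (⇑f.symm)^[n] u ∉ ⇑f '' (W : Set X)} with hm
    set n := sInf {n : ℕ | (⇑f.symm)^[n] v ∉ ⇑f '' (W : Set X)} with hn
    have h1 : (⇑f.symm)^[m] ((⇑f.symm)^[n - m] v) = (⇑f.symm)^[m] u := by
      rw [← Function.iterate_add_apply, show m + (n - m) = n from by omega]
      exact heq.symm
    have h2 : (⇑f.symm)^[n - m] v = u := (f.symm.injective.iterate m) h1
    rcases Nat.eq_zero_or_pos (n - m) with hp | hp
    · rw [hp, Function.iterate_zero_apply] at h2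
      exact h2.symm
    · exfalso
      obtain ⟨q, hq⟩ : ∃ q, n - m = q + 1 := ⟨n - m - 1, by omega⟩
      have hqn : q < n := by omega
      have hw : u ∈ W := by
        rw [← h2, hq, Function.iterate_succ_apply']
        exact (memimg f W).1 (hlt v q hqn)
      exact hu hw
  have hfix : ∀ v : X, v ∉ (W : Set X) ∪ ⇑f '' (W : Set X) → restrictPerm f W v = v := by
    intro v hv
    rw [Set.mem_union] at hv
    push_neg at hv
    have hvW : v ∉ W := by simpa using hv.1
    have h0 : sInf {n : ℕ | (⇑f.symm)^[n] v ∉ ⇑f '' (W : Set X)} = 0 :=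
      Nat.sInf_eq_zero.2 (Or.inl hv.2)
    unfold restrictPerm
    rw [if_neg hvW, h0, Function.iterate_zero_apply]
  refine ⟨⟨?_, ?_⟩, hfix⟩
  · -- injective
    intro u v heq
    unfold restrictPerm at heq
    split_ifs at heq with hu hv hv
    · exact f.injective heq
    · exfalso
      have : f u ∈ ⇑f '' (W : Set X) := ⟨u, by simpa using hu, rfl⟩
      rw [heq] at this
      exact hmem v hv this
    · exfalso
      have : f v ∈ ⇑f '' (W : Set X) := ⟨v, by simpa using hv, rfl⟩
      rw [← heq] at this
      exact hmem u hu this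
    · rcases le_total (sInf {n : ℕ | (⇑f.symm)^[n] u ∉ ⇑f '' (W : Set X)})
        (sInf {n : ℕ | (⇑f.symm)^[n] v ∉ ⇑f '' (W : Set X)}) with h | h
      · exact injaux u v hu hv h heq
      · exact (injaux v u hv hu h heq.symm).symm
  · -- surjective
    intro t
    by_cases ht : t ∈ ⇑f '' (W : Set X)
    · obtain ⟨w, hw, hfw⟩ := ht
      have hw' : w ∈ W := hw
      refine ⟨w, ?_⟩
      unfold restrictPerm
      rw [if_pos hw']
      exact hfw
    · by_cases htW : t ∈ W
      · have hne := nonemptyB f W htW ht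
        set M := sInf {n : ℕ | (⇑f)^[n + 1] t ∉ W} with hM
        have hM1 : (⇑f)^[M + 1] t ∉ W := Nat.sInf_mem hne
        have hMle : ∀ j, j ≤ M → (⇑f)^[j] t ∈ W := by
          intro j hj
          match j, hj with
          | 0, _ => exact htW
          | r + 1, hj => exact not_not.1 (Nat.notMem_of_lt_sInf (show r < M by omega))
        set v := (⇑f)^[M + 1] t with hv
        have hback : ∀ k, k ≤ M + 1 → (⇑f.symm)^[k] v = (⇑f)^[M + 1 - k] t := by
          intro k hk
          have hvk : v = (⇑f)^[k] ((⇑f)^[M + 1 - k] t) := by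
            rw [← Function.iterate_add_apply, show k + (M + 1 - k) = M + 1 from by omega]
          rw [hvk]
          exact f.left_inv.iterate k _
        have hSv : sInf {n : ℕ | (⇑f.symm)^[n] v ∉ ⇑f '' (W : Set X)} = M + 1 := by
          apply le_antisymm
          · apply Nat.sInf_le
            show (⇑f.symm)^[M + 1] v ∉ ⇑f '' (W : Set X)
            rw [hback (M + 1) le_rfl, Nat.sub_self, Function.iterate_zero_apply]
            exact ht
          · refine le_csInf ⟨M + 1, ?_⟩ ?_
            · show (⇑f.symm)^[M + 1] v ∉ ⇑f '' (W : Set X)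
              rw [hback (M + 1) le_rfl, Nat.sub_self, Function.iterate_zero_apply]
              exact ht
            · intro b hb
              by_contra hble
              have hbM : b ≤ M := by omega
              apply hb
              rw [hback b (by omega), show M + 1 - b = (M - b) + 1 from by omega,
                Function.iterate_succ_apply']
              exact ⟨(⇑f)^[M - b] t, hMle (M - b) (by omega), rfl⟩
        refine ⟨v, ?_⟩
        unfold restrictPerm
        rw [if_neg hM1, hSv, hback (M + 1) le_rfl, Nat.sub_self, Function.iterate_zero_apply]
      · refine ⟨t, hfix t ?_⟩
        rw [Set.mem_union]
        push_neg
        exact ⟨by simpa using htW, ht⟩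
end

section
/- Let f : X → X be a permutation and W ⊆ X finite. Then the permutation g = (f|_W)^{-1} ∘ f fixes every element of W; hence every permutation f factors as f = f|_W ∘ g with f|_W a finite permutation and g a permutation fixing W pointwise. -/
/-- Forward orbit of `f v` escapes the finite set `W` when `v ∉ W`. -/
lemma escape {X : Type*} (f : Equiv.Perm X) (W : Finset X) {v : X} (hv : v ∉ W) :
    ∃ m : ℕ, f^[m] (f v) ∉ W := by
  by_contra h
  push_neg at h
  obtain ⟨a, b, hab, heq⟩ :=
    Finite.exists_ne_map_eq_of_infinite (fun m : ℕ => (⟨f^[m] (f v), h m⟩ : W))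
  wlog hlt : a < b generalizing a b
  · exact this b a hab.symm heq.symm (by omega)
  have heq' : f^[a] (f v) = f^[b] (f v) := congrArg Subtype.val heq
  have hb : b = a + ((b - a - 1) + 1) := by omega
  rw [hb, Function.iterate_add_apply] at heq'
  have h2 : f v = f^[(b - a - 1) + 1] (f v) :=
    (f.injective.iterate a) heq'
  rw [Function.iterate_succ_apply'] at h2
  have h3 : v = f^[b - a - 1] (f v) := f.injective h2
  exact hv (h3 ▸ h (b - a - 1))

lemma symm_iterate_sub {X : Type*} (f : Equiv.Perm X) {n m : ℕ} (h : n ≤ m) (x : X) :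
    f.symm^[n] (f^[m] x) = f^[m - n] x := by
  have h1 : f^[m] x = f^[n] (f^[m - n] x) := by
    rw [← Function.iterate_add_apply, Nat.add_sub_cancel' h]
  rw [h1, Function.LeftInverse.iterate f.symm_apply_apply n]

/-- The permutation `g = (f|_W)⁻¹ ∘ f` fixes `W` pointwise; hence every permutation `f`
factors as `f = f|_W ∘ g` with `g` a permutation fixing `W` pointwise. -/
theorem stmt2 {X : Type*} [DecidableEq X] (f : Equiv.Perm X) (W : Finset X) :
    ∃ g : X → X, Function.Bijective g ∧ (∀ v ∈ W, g v = v) ∧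
      ∀ v : X, restrictPerm f W (g v) = f v := by
  classical
  set g : X → X := fun v =>
    if v ∈ W then v else f^[sInf {m : ℕ | f^[m] (f v) ∉ W}] (f v) with hg
  have himg : ∀ x : X, x ∈ ⇑f '' (W : Set X) ↔ f.symm x ∈ W := by
    intro x
    rw [Equiv.image_eq_preimage_symm]
    rfl
  have key : ∀ v : X, restrictPerm f W (g v) = f v := by
    intro v
    by_cases hv : v ∈ W
    · have : g v = v := if_pos hv
      rw [this]
      unfold restrictPerm
      rw [if_pos hv]
    · have hne : {m : ℕ | f^[m] (f v) ∉ W}.Nonempty := escape f W hv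
      set m := sInf {m : ℕ | f^[m] (f v) ∉ W} with hm
      have hmem : f^[m] (f v) ∉ W := Nat.sInf_mem hne
      have hlt : ∀ j < m, f^[j] (f v) ∈ W := by
        intro j hj
        by_contra hcon
        exact absurd (Nat.sInf_le hcon) (not_le.2 hj)
      have hgv : g v = f^[m] (f v) := if_neg hv
      rw [hgv]
      unfold restrictPerm
      rw [if_neg hmem]
      have h1 : f.symm^[m] (f^[m] (f v)) = f v :=
        Function.LeftInverse.iterate f.symm_apply_apply m (f v)
      have hset : sInf {n : ℕ | f.symm^[n] (f^[m] (f v)) ∉ ⇑f '' (W : Set X)} = m := by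
        have hmemset : m ∈ {n : ℕ | f.symm^[n] (f^[m] (f v)) ∉ ⇑f '' (W : Set X)} := by
          simp only [Set.mem_setOf_eq, h1, himg, f.symm_apply_apply]
          exact hv
        refine le_antisymm (Nat.sInf_le hmemset) ?_
        by_contra hcon
        push_neg at hcon
        have hns := Nat.sInf_mem ⟨m, hmemset⟩
        set n := sInf {n : ℕ | f.symm^[n] (f^[m] (f v)) ∉ ⇑f '' (W : Set X)} with hn
        have hnm : n < m := hcon
        have hsub : f.symm^[n] (f^[m] (f v)) = f^[m - n] (f v) :=
          symm_iterate_sub f hnm.le (f v)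
        simp only [Set.mem_setOf_eq] at hns
        have hmn : m - n = (m - n - 1) + 1 := by omega
        rw [hsub, hmn, Function.iterate_succ_apply'] at hns
        exact hns ⟨f^[m - n - 1] (f v), hlt _ (by omega), rfl⟩
      rw [hset, h1]
  have hinj : Function.Injective g := by
    intro a b hab
    apply f.injective
    rw [← key a, ← key b, hab]
  have hsurj : Function.Surjective g := by
    intro s
    by_cases hs : s ∈ W
    · exact ⟨s, if_pos hs⟩
    · have hne : {k : ℕ | f.symm^[k] (f.symm s) ∉ W}.Nonempty := by
        obtain ⟨m, hm⟩ := escape f.symm W hs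
        exact ⟨m, hm⟩
      set k := sInf {k : ℕ | f.symm^[k] (f.symm s) ∉ W} with hk
      have hkmem : f.symm^[k] (f.symm s) ∉ W := Nat.sInf_mem hne
      have hklt : ∀ j < k, f.symm^[j] (f.symm s) ∈ W := by
        intro j hj
        by_contra hcon
        exact absurd (Nat.sInf_le hcon) (not_le.2 hj)
      set v := f.symm^[k] (f.symm s) with hvdef
      have hv : v ∉ W := hkmem
      have hfv : f v = f.symm^[k] s := by
        have : v = f.symm (f.symm^[k] s) := by
          rw [hvdef, ← Function.iterate_succ_apply, Function.iterate_succ_apply']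
        rw [this, f.apply_symm_apply]
      have horb : ∀ j ≤ k, f^[j] (f v) = f.symm^[k - j] s := by
        intro j hj
        rw [hfv]
        have := symm_iterate_sub f.symm hj s
        simpa using this
      have hmk : sInf {m : ℕ | f^[m] (f v) ∉ W} = k := by
        have hkin : k ∈ {m : ℕ | f^[m] (f v) ∉ W} := by
          simp only [Set.mem_setOf_eq, horb k le_rfl, Nat.sub_self,
            Function.iterate_zero_apply]
          exact hs
        refine le_antisymm (Nat.sInf_le hkin) ?_
        by_contra hcon
        push_neg at hcon
        have hns := Nat.sInf_mem (⟨k, hkin⟩ : {m : ℕ | f^[m] (f v) ∉ W}.Nonempty)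
        set n := sInf {m : ℕ | f^[m] (f v) ∉ W} with hn
        have hnk : n < k := hcon
        simp only [Set.mem_setOf_eq] at hns
        rw [horb n hnk.le] at hns
        have hkn : k - n = (k - n - 1) + 1 := by omega
        rw [hkn, Function.iterate_succ_apply] at hns
        exact hns (hklt _ (by omega))
      refine ⟨v, ?_⟩
      have : g v = f^[sInf {m : ℕ | f^[m] (f v) ∉ W}] (f v) := if_neg hv
      rw [this, hmk, horb k le_rfl, Nat.sub_self, Function.iterate_zero_apply]
  exact ⟨g, ⟨hinj, hsurj⟩, fun v hv => if_pos hv, key⟩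
end

section
/- For an element x of a nominal set X, the number of elements y in the orbit of x with supp(y) = supp(x) is at most |supp(x)|! (factorial of the size of the support of x). -/
/-- The subgroup of finite (finitary) permutations of the set `𝕍` of atoms. -/
def FinPerm (𝕍 : Type*) : Subgroup (Equiv.Perm 𝕍) where
  carrier := {π | {a | π a ≠ a}.Finite}
  one_mem' := by simp
  mul_mem' := by
    intro π σ hπ hσ
    apply Set.Finite.subset (hσ.union (hπ.preimage σ.injective.injOn))
    intro a ha
    by_cases h : σ a = a
    · right
      simp only [Set.mem_preimage, Set.mem_setOf_eq]
      simpa [Equiv.Perm.mul_apply, h] using ha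
    · exact Or.inl h
  inv_mem' := by
    intro π hπ
    have : {a | π⁻¹ a ≠ a} = {a | π a ≠ a} := by
      ext a
      simp only [Set.mem_setOf_eq, not_iff_not]
      rw [Equiv.Perm.inv_eq_iff_eq, eq_comm]
    show {a | π⁻¹ a ≠ a}.Finite
    rw [this]
    exact hπ


/-- In the orbit of `x`, there are at most `|supp x|!` elements with support equal
to `supp x`. -/
theorem stmt7 {𝕍 X : Type*} [Infinite 𝕍] [MulAction (FinPerm 𝕍) X]
    (supp : X → Finset 𝕍)
    (hsupp : ∀ (x : X) (π : FinPerm 𝕍), (∀ a ∈ supp x, π • a = a) → π • x = x)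
    (hmin : ∀ (x : X) (S : Finset 𝕍),
      (∀ π : FinPerm 𝕍, (∀ a ∈ S, π • a = a) → π • x = x) → supp x ⊆ S)
    (x : X) :
    {y | y ∈ MulAction.orbit (FinPerm 𝕍) x ∧ supp y = supp x}.Finite ∧
    {y | y ∈ MulAction.orbit (FinPerm 𝕍) x ∧ supp y = supp x}.ncard
      ≤ Nat.factorial (supp x).card := by
  classical
  set S := {y | y ∈ MulAction.orbit (FinPerm 𝕍) x ∧ supp y = supp x} with hSdef
  -- key: if supp (π • x) = supp x then π preserves supp x
  have key : ∀ π : FinPerm 𝕍, supp (π • x) = supp x →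
      ∀ a, a ∈ supp x ↔ (π : Equiv.Perm 𝕍) a ∈ supp x := by
    intro π hπ
    have hsub : supp (π • x) ⊆ (supp x).image (π : Equiv.Perm 𝕍) := by
      apply hmin
      intro σ hσ
      have h1 : ∀ a ∈ supp x, (π⁻¹ * σ * π) • a = a := by
        intro a ha
        have hm : (π : Equiv.Perm 𝕍) a ∈ (supp x).image (π : Equiv.Perm 𝕍) :=
          Finset.mem_image_of_mem _ ha
        have h2 := hσ _ hm
        have : (π⁻¹ * σ * π) • a = π⁻¹ • σ • π • a := by
          rw [mul_smul, mul_smul]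
        rw [this]
        have hπa : (π : FinPerm 𝕍) • a = (π : Equiv.Perm 𝕍) a := rfl
        rw [hπa, h2]
        show ((π⁻¹ : FinPerm 𝕍) : Equiv.Perm 𝕍) ((π : Equiv.Perm 𝕍) a) = a
        simp
      have h3 := hsupp x _ h1
      calc σ • π • x = π • (π⁻¹ * σ * π) • x := by
            rw [← mul_smul, ← mul_smul]; group
        _ = π • x := by rw [h3]
    rw [hπ] at hsub
    have hcard : ((supp x).image (π : Equiv.Perm 𝕍)).card = (supp x).card :=
      Finset.card_image_of_injective _ (Equiv.injective _)
    have himg : (supp x).image (π : Equiv.Perm 𝕍) = supp x :=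
      (Finset.eq_of_subset_of_card_le hsub hcard.le).symm
    intro a
    constructor
    · intro ha
      rw [← himg]; exact Finset.mem_image_of_mem _ ha
    · intro ha
      rw [← himg] at ha
      obtain ⟨b, hb, hba⟩ := Finset.mem_image.mp ha
      rwa [← (Equiv.injective _ hba)]
  -- construct the injection
  have hchoice : ∀ y : S, ∃ π : FinPerm 𝕍, π • x = (y : X) := fun y => y.2.1
  choose pi hpi using hchoice
  let f : S → Equiv.Perm {a // a ∈ supp x} := fun y =>
    Equiv.Perm.subtypePerm (pi y : Equiv.Perm 𝕍) (by
      have := key (pi y) (by rw [hpi y]; exact y.2.2)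
      intro a; exact (this a).symm)
  have hfinj : Function.Injective f := by
    intro y z hyz
    have hagree : ∀ a ∈ supp x, (pi y : Equiv.Perm 𝕍) a = (pi z : Equiv.Perm 𝕍) a := by
      intro a ha
      have := congrArg (fun g => (g ⟨a, ha⟩ : {a // a ∈ supp x})) hyz
      simpa [f, Equiv.Perm.subtypePerm] using congrArg Subtype.val this
    have hfix : ∀ a ∈ supp x, ((pi z)⁻¹ * pi y) • a = a := by
      intro a ha
      have : ((pi z)⁻¹ * pi y) • a = (pi z)⁻¹ • (pi y) • a := mul_smul _ _ _
      rw [this]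
      show ((pi z)⁻¹ : FinPerm 𝕍).val ((pi y : Equiv.Perm 𝕍) a) = a
      rw [hagree a ha]
      simp
    have := hsupp x _ hfix
    have h4 : (pi y) • x = (pi z) • x := by
      have := congrArg (fun w => (pi z) • w) this
      simpa [← mul_smul, mul_assoc] using this
    have : (y : X) = (z : X) := by rw [← hpi y, ← hpi z, h4]
    exact Subtype.ext this
  have hfin : Finite S := Finite.of_injective f hfinj
  have hfinS : S.Finite := Set.finite_coe_iff.mp hfin
  refine ⟨hfinS, ?_⟩
  have h5 : Nat.card S ≤ Nat.card (Equiv.Perm {a // a ∈ supp x}) :=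
    Nat.card_le_card_of_injective f hfinj
  have h6 : Nat.card (Equiv.Perm {a // a ∈ supp x}) = Nat.factorial (supp x).card := by
    rw [Nat.card_eq_fintype_card, Fintype.card_perm, Fintype.card_coe]
  rw [← Nat.card_coe_set_eq]
  omega
end

section
/- Let X be a strong nominal set, O ⊆ X a set containing exactly one element from each orbit of X, Y a nominal set, and f₀ : O → Y a function with supp(f₀(x)) ⊆ supp(x) for all x ∈ O. Then f₀ extends uniquely to an equivariant map f : X → Y. -/
/-- Extension property of strong nominal sets: a map `f₀` defined on a set `O` of orbit
representatives with `supp (f₀ x) ⊆ supp x` extends uniquely to an equivariant map. -/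
theorem stmt11 {𝕍 X Y : Type*} [Infinite 𝕍]
    [MulAction (FinPerm 𝕍) X] [MulAction (FinPerm 𝕍) Y]
    (suppX : X → Finset 𝕍) (suppY : Y → Finset 𝕍)
    (hX : ∀ (x : X) (π : FinPerm 𝕍), (∀ a ∈ suppX x, π • a = a) → π • x = x)
    (hXmin : ∀ (x : X) (S : Finset 𝕍),
      (∀ π : FinPerm 𝕍, (∀ a ∈ S, π • a = a) → π • x = x) → suppX x ⊆ S)
    (hY : ∀ (y : Y) (π : FinPerm 𝕍), (∀ a ∈ suppY y, π • a = a) → π • y = y)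
    (hYmin : ∀ (y : Y) (S : Finset 𝕍),
      (∀ π : FinPerm 𝕍, (∀ a ∈ S, π • a = a) → π • y = y) → suppY y ⊆ S)
    (hstrong : ∀ (x : X) (π : FinPerm 𝕍), π • x = x → ∀ a ∈ suppX x, π • a = a)
    (O : Set X) (hO : ∀ x : X, ∃! o : X, o ∈ O ∧ x ∈ MulAction.orbit (FinPerm 𝕍) o)
    (f₀ : X → Y) (hf₀ : ∀ x ∈ O, suppY (f₀ x) ⊆ suppX x) :
    ∃! f : X → Y, (∀ (π : FinPerm 𝕍) (x : X), f (π • x) = π • f x) ∧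
      ∀ x ∈ O, f x = f₀ x := by
    classical
  -- key independence lemma
  have key : ∀ o ∈ O, ∀ π σ : FinPerm 𝕍, π • o = σ • o → π • f₀ o = σ • f₀ o := by
    intro o hoO π σ h
    have hτ : (σ⁻¹ * π) • o = o := by
      rw [mul_smul, h, ← mul_smul, inv_mul_cancel, one_smul]
    have hfix := hstrong o (σ⁻¹ * π) hτ
    have hfy : (σ⁻¹ * π) • f₀ o = f₀ o :=
      hY (f₀ o) (σ⁻¹ * π) (fun a ha => hfix a (hf₀ o hoO ha))
    calc π • f₀ o = σ • ((σ⁻¹ * π) • f₀ o) := by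
          rw [← mul_smul, ← mul_assoc, mul_inv_cancel, one_mul]
      _ = σ • f₀ o := by rw [hfy]
  set rep : X → X := fun x => (hO x).choose with hrepdef
  have hrep1 : ∀ x, rep x ∈ O := fun x => (hO x).choose_spec.1.1
  have hrep2 : ∀ x, ∃ π : FinPerm 𝕍, π • rep x = x := by
    intro x
    have := (hO x).choose_spec.1.2
    rwa [MulAction.mem_orbit_iff] at this
  have hrepU : ∀ (x o : X), o ∈ O → x ∈ MulAction.orbit (FinPerm 𝕍) o → rep x = o :=
    fun x o hoO horb => ((hO x).choose_spec.2 o ⟨hoO, horb⟩).symm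
  set perm : X → FinPerm 𝕍 := fun x => (hrep2 x).choose with hpermdef
  have hperm : ∀ x, perm x • rep x = x := fun x => (hrep2 x).choose_spec
  set f : X → Y := fun x => perm x • f₀ (rep x) with hfdef
  have hrepfix : ∀ o ∈ O, rep o = o := by
    intro o hoO
    exact hrepU o o hoO (MulAction.mem_orbit_self o)
  have hagree : ∀ o ∈ O, f o = f₀ o := by
    intro o hoO
    have h1 : rep o = o := hrepfix o hoO
    have h2 : perm o • o = o := by have := hperm o; rwa [h1] at this
    have := key o hoO (perm o) 1 (by rw [h2, one_smul])
    simp only [hfdef, h1, this, one_smul]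
  have hequiv : ∀ (π : FinPerm 𝕍) (x : X), f (π • x) = π • f x := by
    intro π x
    have hrepeq : rep (π • x) = rep x := by
      apply hrepU
      · exact hrep1 x
      · refine ⟨π * perm x, ?_⟩
        show (π * perm x) • rep x = π • x
        rw [mul_smul, hperm x]
    have h1 : perm (π • x) • rep x = (π * perm x) • rep x := by
      rw [mul_smul, hperm x, ← hrepeq, hperm (π • x)]
    have := key (rep x) (hrep1 x) (perm (π • x)) (π * perm x) h1
    simp only [hfdef, hrepeq, this, mul_smul]
  refine ⟨f, ⟨hequiv, hagree⟩, ?_⟩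
  intro g ⟨hgequiv, hgagree⟩
  funext x
  calc g x = g (perm x • rep x) := by rw [hperm x]
    _ = perm x • g (rep x) := hgequiv _ _
    _ = perm x • f₀ (rep x) := by rw [hgagree _ (hrep1 x)]
    _ = f x := rfl
end

section
/- Let e : X → Y be an equivariant map between nominal sets, x ∈ X, and S a finite set of atoms with supp(e(x)) ⊆ S and |supp(x)| ≤ |S|. Then there exists a finite permutation π of the atoms such that supp(π·x) ⊆ S and e(π·x) = e(x). -/
open Classical in
/-- Involution swapping two disjoint finsets along a bijection. -/
noncomputable def swapFinsets {𝕍 : Type*} (A B : Finset 𝕍) (hd : Disjoint A B)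
    (g : A ≃ B) : Equiv.Perm 𝕍 := by
  classical
  refine ⟨fun v => if h : v ∈ A then (g ⟨v, h⟩ : 𝕍) else if h : v ∈ B then (g.symm ⟨v, h⟩ : 𝕍) else v,
      fun v => if h : v ∈ A then (g ⟨v, h⟩ : 𝕍) else if h : v ∈ B then (g.symm ⟨v, h⟩ : 𝕍) else v,
      ?_, ?_⟩ <;>
  · intro v
    by_cases hA : v ∈ A
    · have hB : (g ⟨v, hA⟩ : 𝕍) ∈ B := (g ⟨v, hA⟩).2
      have hnA : (g ⟨v, hA⟩ : 𝕍) ∉ A := fun h => (Finset.disjoint_left.mp hd h) hB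
      show (fun v => if h : v ∈ A then (g ⟨v, h⟩ : 𝕍) else if h : v ∈ B then (g.symm ⟨v, h⟩ : 𝕍) else v)
        (if h : v ∈ A then (g ⟨v, h⟩ : 𝕍) else if h : v ∈ B then (g.symm ⟨v, h⟩ : 𝕍) else v) = v
      rw [dif_pos hA]
      simp only
      rw [dif_neg hnA, dif_pos hB,
        show (⟨(g ⟨v, hA⟩ : 𝕍), hB⟩ : B) = g ⟨v, hA⟩ from rfl, Equiv.symm_apply_apply]
    · by_cases hB : v ∈ B
      · have hA2 : (g.symm ⟨v, hB⟩ : 𝕍) ∈ A := (g.symm ⟨v, hB⟩).2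
        show (fun v => if h : v ∈ A then (g ⟨v, h⟩ : 𝕍) else if h : v ∈ B then (g.symm ⟨v, h⟩ : 𝕍) else v)
          (if h : v ∈ A then (g ⟨v, h⟩ : 𝕍) else if h : v ∈ B then (g.symm ⟨v, h⟩ : 𝕍) else v) = v
        rw [dif_neg hA, dif_pos hB]
        simp only
        rw [dif_pos hA2,
          show (⟨(g.symm ⟨v, hB⟩ : 𝕍), hA2⟩ : A) = g.symm ⟨v, hB⟩ from rfl, Equiv.apply_symm_apply]
      · simp [hA, hB]

open Classical in
lemma swapFinsets_apply {𝕍 : Type*} (A B : Finset 𝕍) (hd : Disjoint A B)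
    (g : A ≃ B) (v : 𝕍) :
    swapFinsets A B hd g v =
      if h : v ∈ A then (g ⟨v, h⟩ : 𝕍) else if h : v ∈ B then (g.symm ⟨v, h⟩ : 𝕍) else v := rfl

lemma swapFinsets_mem_finPerm {𝕍 : Type*} (A B : Finset 𝕍) (hd : Disjoint A B)
    (g : A ≃ B) : swapFinsets A B hd g ∈ FinPerm 𝕍 := by
  classical
  apply Set.Finite.subset (A ∪ B : Finset 𝕍).finite_toSet
  intro v hv
  by_contra hnv
  simp only [Finset.coe_union, Set.mem_union, Finset.mem_coe, not_or] at hnv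
  exact hv (by rw [swapFinsets_apply, dif_neg hnv.1, dif_neg hnv.2])

/-- If `e : X → Y` is equivariant, `supp (e x) ⊆ S` and `|supp x| ≤ |S|` for a finite set
`S` of atoms, then there is a finite permutation `π` with `supp (π • x) ⊆ S` and
`e (π • x) = e x`. -/
theorem stmt12 {𝕍 X Y : Type*} [Infinite 𝕍]
    [MulAction (FinPerm 𝕍) X] [MulAction (FinPerm 𝕍) Y]
    (suppX : X → Finset 𝕍) (suppY : Y → Finset 𝕍)
    (hX : ∀ (x : X) (π : FinPerm 𝕍), (∀ a ∈ suppX x, π • a = a) → π • x = x)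
    (hXmin : ∀ (x : X) (S : Finset 𝕍),
      (∀ π : FinPerm 𝕍, (∀ a ∈ S, π • a = a) → π • x = x) → suppX x ⊆ S)
    (hY : ∀ (y : Y) (π : FinPerm 𝕍), (∀ a ∈ suppY y, π • a = a) → π • y = y)
    (hYmin : ∀ (y : Y) (S : Finset 𝕍),
      (∀ π : FinPerm 𝕍, (∀ a ∈ S, π • a = a) → π • y = y) → suppY y ⊆ S)
    (e : X → Y) (he : ∀ (π : FinPerm 𝕍) (x : X), e (π • x) = π • e x)
    (x : X) (S : Finset 𝕍) (h1 : suppY (e x) ⊆ S) (h2 : (suppX x).card ≤ S.card) :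
    ∃ π : FinPerm 𝕍, suppX (π • x) ⊆ S ∧ e (π • x) = e x := by
  classical
  set T : Finset 𝕍 := suppY (e x) with hT
  -- T ⊆ suppX x
  have hTsub : T ⊆ suppX x := by
    apply hYmin
    intro π hπ
    rw [← he]
    rw [hX x π hπ]
  set A : Finset 𝕍 := suppX x \ S with hA
  set B1 : Finset 𝕍 := S \ suppX x with hB1
  have hcard : A.card ≤ B1.card := by
    have h3 : A.card + (suppX x ∩ S).card = (suppX x).card :=
      Finset.card_sdiff_add_card_inter _ _
    have h4 : B1.card + (S ∩ suppX x).card = S.card :=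
      Finset.card_sdiff_add_card_inter _ _
    rw [Finset.inter_comm] at h4
    omega
  obtain ⟨B', hB'sub, hB'card⟩ := Finset.exists_subset_card_eq hcard
  have hdisj : Disjoint A B' := by
    apply Finset.disjoint_left.mpr
    intro a ha hb
    exact (Finset.mem_sdiff.mp (hB'sub hb)).2 (Finset.mem_sdiff.mp ha).1
  have gcard : Fintype.card A = Fintype.card B' := by
    simp [hB'card]
  let g : A ≃ B' := Fintype.equivOfCardEq gcard
  let σ : Equiv.Perm 𝕍 := swapFinsets A B' hdisj g
  let π : FinPerm 𝕍 := ⟨σ, swapFinsets_mem_finPerm A B' hdisj g⟩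
  -- π • a = σ a for atoms
  have hsmul : ∀ a : 𝕍, π • a = σ a := fun a => rfl
  -- σ fixes T pointwise
  have hfixT : ∀ a ∈ T, π • a = a := by
    intro a ha
    have hnA : a ∉ A := by
      simp only [hA, Finset.mem_sdiff, not_and, not_not]
      intro _; exact h1 ha
    have hnB : a ∉ B' := by
      intro hb
      exact (Finset.mem_sdiff.mp (hB'sub hb)).2 (hTsub ha)
    rw [hsmul, show σ a = _ from swapFinsets_apply _ _ _ _ a, dif_neg hnA, dif_neg hnB]
  -- σ maps suppX x into S
  have hmaps : ∀ a ∈ suppX x, σ a ∈ S := by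
    intro a ha
    by_cases hS : a ∈ S
    · have hnA : a ∉ A := by simp [hA, hS]
      have hnB : a ∉ B' := fun hb => (Finset.mem_sdiff.mp (hB'sub hb)).2 ha
      rw [show σ a = _ from swapFinsets_apply _ _ _ _ a, dif_neg hnA, dif_neg hnB]
      exact hS
    · have hmA : a ∈ A := Finset.mem_sdiff.mpr ⟨ha, hS⟩
      rw [show σ a = _ from swapFinsets_apply _ _ _ _ a, dif_pos hmA]
      exact (Finset.mem_sdiff.mp (hB'sub (g ⟨a, hmA⟩).2)).1
  refine ⟨π, ?_, ?_⟩
  · -- suppX (π • x) ⊆ S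
    apply hXmin
    intro τ hτ
    have key : ∀ a ∈ suppX x, (π⁻¹ * τ * π) • a = a := by
      intro a ha
      have : τ • (π • a) = π • a := hτ _ (by rw [hsmul]; exact hmaps a ha)
      calc (π⁻¹ * τ * π) • a = π⁻¹ • (τ • (π • a)) := by
            simp [mul_smul]
        _ = π⁻¹ • (π • a) := by rw [this]
        _ = a := inv_smul_smul π a
    have := hX x _ key
    calc τ • (π • x) = (τ * π) • x := (mul_smul _ _ _).symm
      _ = (π * (π⁻¹ * τ * π)) • x := by group
      _ = π • ((π⁻¹ * τ * π) • x) := mul_smul _ _ _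
      _ = π • x := by rw [this]
  · rw [he, hY (e x) π hfixT]
end

section
/- Every single-orbit strong nominal set P is isomorphic (as a nominal set) to 𝕍^{n≠}, the nominal set of n-tuples of pairwise distinct atoms, where n = |supp(p)| for any p ∈ P. -/
/-- The nominal set `𝕍^{n≠}` of `n`-tuples of pairwise distinct atoms. -/
abbrev DistinctTuples (𝕍 : Type*) (n : ℕ) : Type _ := {t : Fin n → 𝕍 // Function.Injective t}

instance {𝕍 : Type*} {n : ℕ} : MulAction (FinPerm 𝕍) (DistinctTuples 𝕍 n) where
  smul π t := ⟨fun i => π • t.1 i, fun _ _ h => t.2 (MulAction.injective π h)⟩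
  one_smul t := Subtype.ext (funext fun i => one_smul (FinPerm 𝕍) (t.1 i))
  mul_smul π σ t := Subtype.ext (funext fun i => mul_smul π σ (t.1 i))

open Function Equiv

lemma smul_tuple_apply {𝕍 : Type*} {n : ℕ} (π : FinPerm 𝕍) (t : DistinctTuples 𝕍 n) (i : Fin n) :
    (π • t).1 i = π • t.1 i := rfl

lemma finperm_smul_def {𝕍 : Type*} (π : FinPerm 𝕍) (a : 𝕍) :
    π • a = (π : Equiv.Perm 𝕍) a := rfl

lemma exists_perm_fintype {α : Type*} [Fintype α] {n : ℕ} (u v : Fin n → α)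
    (hu : Injective u) (hv : Injective v) : ∃ σ : Equiv.Perm α, ∀ i, σ (u i) = v i := by
  classical
  have hcard : Fintype.card ↥(Set.range u)ᶜ = Fintype.card ↥(Set.range v)ᶜ := by
    rw [Fintype.card_compl_set, Fintype.card_compl_set,
      Set.card_range_of_injective hu, Set.card_range_of_injective hv]
  let g : Set.range u ≃ Set.range v :=
    (Equiv.ofInjective u hu).symm.trans (Equiv.ofInjective v hv)
  let gc : ↥(Set.range u)ᶜ ≃ ↥(Set.range v)ᶜ := Fintype.equivOfCardEq hcard
  refine ⟨(Equiv.Set.sumCompl (Set.range u)).symm.trans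
    ((g.sumCongr gc).trans (Equiv.Set.sumCompl (Set.range v))), fun i => ?_⟩
  have h1 : (Equiv.Set.sumCompl (Set.range u)).symm (u i) = Sum.inl ⟨u i, ⟨i, rfl⟩⟩ := by
    exact Set.sumCompl_symm_apply (x := (⟨u i, ⟨i, rfl⟩⟩ : Set.range u))
  simp only [Equiv.trans_apply, h1, Equiv.sumCongr_apply, Sum.map_inl]
  have h2 : g ⟨u i, ⟨i, rfl⟩⟩ = ⟨v i, ⟨i, rfl⟩⟩ := by
    simp only [g, Equiv.trans_apply]
    have : (⟨u i, ⟨i, rfl⟩⟩ : Set.range u) = Equiv.ofInjective u hu i := rfl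
    rw [this, Equiv.symm_apply_apply]
    rfl
  rw [h2]
  rfl

lemma exists_finperm {𝕍 : Type*} {n : ℕ} (u v : Fin n → 𝕍)
    (hu : Injective u) (hv : Injective v) :
    ∃ π : FinPerm 𝕍, ∀ i, π • (u i) = v i := by
  classical
  let s : Finset 𝕍 := Finset.image u Finset.univ ∪ Finset.image v Finset.univ
  have hus : ∀ i, u i ∈ s := fun i => by simp [s]
  have hvs : ∀ i, v i ∈ s := fun i => by simp [s]
  let u' : Fin n → {a // a ∈ s} := fun i => ⟨u i, hus i⟩
  let v' : Fin n → {a // a ∈ s} := fun i => ⟨v i, hvs i⟩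
  have hu' : Injective u' := fun i j h => hu (congrArg Subtype.val h)
  have hv' : Injective v' := fun i j h => hv (congrArg Subtype.val h)
  obtain ⟨σ, hσ⟩ := exists_perm_fintype u' v' hu' hv'
  let f : {a // a ∈ s} ≃ Subtype (fun a => a ∈ s) := Equiv.refl _
  let π : Equiv.Perm 𝕍 := σ.extendDomain f
  have hπmem : π ∈ FinPerm 𝕍 := by
    apply Set.Finite.subset s.finite_toSet
    intro a ha
    by_contra h
    exact ha (Equiv.Perm.extendDomain_apply_not_subtype σ f h)
  refine ⟨⟨π, hπmem⟩, fun i => ?_⟩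
  show π (u i) = v i
  have := Equiv.Perm.extendDomain_apply_image σ f (u' i)
  simpa [f, hσ i, u', v'] using this

/-- Every single-orbit strong nominal set `P` is isomorphic, as a nominal set, to the
nominal set `𝕍^{n≠}` of `n`-tuples of distinct atoms, where `n = |supp p|` for `p ∈ P`. -/
theorem stmt13 {𝕍 P : Type*} [Infinite 𝕍] [MulAction (FinPerm 𝕍) P]
    (supp : P → Finset 𝕍)
    (hsupp : ∀ (x : P) (π : FinPerm 𝕍), (∀ a ∈ supp x, π • a = a) → π • x = x)
    (hmin : ∀ (x : P) (S : Finset 𝕍),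
      (∀ π : FinPerm 𝕍, (∀ a ∈ S, π • a = a) → π • x = x) → supp x ⊆ S)
    (hstrong : ∀ (x : P) (π : FinPerm 𝕍), π • x = x → ∀ a ∈ supp x, π • a = a)
    (htrans : ∀ x y : P, ∃ π : FinPerm 𝕍, π • x = y)
    (p : P) :
    ∃ e : P ≃ DistinctTuples 𝕍 (supp p).card,
      ∀ (π : FinPerm 𝕍) (x : P), e (π • x) = π • e x := by
  classical
  set n := (supp p).card with hn
  -- base tuple enumerating supp p
  let f : Fin n ≃ {a // a ∈ supp p} := (supp p).equivFin.symm
  let t₀ : DistinctTuples 𝕍 n :=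
    ⟨fun i => (f i : 𝕍), fun i j h => f.injective (Subtype.ext h)⟩
  have ht₀mem : ∀ i, t₀.1 i ∈ supp p := fun i => (f i).2
  have ht₀surj : ∀ a ∈ supp p, ∃ i, t₀.1 i = a := fun a ha =>
    ⟨f.symm ⟨a, ha⟩, by simp [t₀, f]⟩
  -- agreement lemmas
  have agree : ∀ (π σ : FinPerm 𝕍), π • p = σ • p → ∀ a ∈ supp p, π • a = σ • a := by
    intro π σ h a ha
    have hfix : (σ⁻¹ * π) • p = p := by
      rw [mul_smul, h, ← mul_smul, inv_mul_cancel, one_smul]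
    have := hstrong p (σ⁻¹ * π) hfix a ha
    calc π • a = σ • ((σ⁻¹ * π) • a) := by rw [← mul_smul, mul_inv_cancel_left]
    _ = σ • a := by rw [this]
  have agree' : ∀ (π σ : FinPerm 𝕍), (∀ a ∈ supp p, π • a = σ • a) → π • p = σ • p := by
    intro π σ h
    have hfix : (σ⁻¹ * π) • p = p := by
      apply hsupp p
      intro a ha
      rw [mul_smul, h a ha, ← mul_smul, inv_mul_cancel, one_smul]
    calc π • p = σ • ((σ⁻¹ * π) • p) := by rw [← mul_smul, mul_inv_cancel_left]
    _ = σ • p := by rw [hfix]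
  have key : ∀ (π σ : FinPerm 𝕍), π • p = σ • p → π • t₀ = σ • t₀ := by
    intro π σ h
    exact Subtype.ext (funext fun i => agree π σ h _ (ht₀mem i))
  -- the map
  have hch : ∀ x : P, (Classical.choose (htrans p x)) • p = x :=
    fun x => Classical.choose_spec (htrans p x)
  let φ : P → DistinctTuples 𝕍 n := fun x => (Classical.choose (htrans p x)) • t₀
  have φspec : ∀ (x : P) (π : FinPerm 𝕍), π • p = x → φ x = π • t₀ := by
    intro x π h
    exact key _ π (by rw [hch x, h])
  have hinj : Injective φ := by
    intro x y h
    obtain ⟨π, hπ⟩ := htrans p x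
    obtain ⟨σ, hσ⟩ := htrans p y
    rw [φspec x π hπ, φspec y σ hσ] at h
    have : ∀ a ∈ supp p, π • a = σ • a := by
      intro a ha
      obtain ⟨i, hi⟩ := ht₀surj a ha
      have := congrArg (fun t => t.1 i) h
      rw [← hi]
      exact this
    rw [← hπ, ← hσ, agree' π σ this]
  have hsurj : Surjective φ := by
    intro t
    obtain ⟨π, hπ⟩ := exists_finperm t₀.1 t.1 t₀.2 t.2
    refine ⟨π • p, ?_⟩
    rw [φspec (π • p) π rfl]
    exact Subtype.ext (funext fun i => hπ i)
  refine ⟨Equiv.ofBijective φ ⟨hinj, hsurj⟩, fun π x => ?_⟩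
  show φ (π • x) = π • φ x
  obtain ⟨σ, hσ⟩ := htrans p x
  rw [φspec x σ hσ, φspec (π • x) (π * σ) (by rw [mul_smul, hσ]), mul_smul]
end

section
/- For any n ≥ 1, the map fill : X^n × X^{2n≠} → X^{n≠} (which removes duplicates from the first tuple and fills the remaining positions with fresh components from the second tuple) satisfies fill(m(v⃗), w⃗) = v⃗ for every v⃗ ∈ X^{n≠} and w⃗ ∈ X^{2n≠}, where m : X^{n≠} ↪ X^n is the inclusion; moreover fill is equivariant when X is a nominal set. -/
/-- The map `fill : Xⁿ × X^{2n≠} → X^{n≠}`, given by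
`fill v w = take n (dedup v ++ (components of w not in v))`, restricts to the identity on
`X^{n≠}` (i.e. `fill (m v) w = v` for `v` a tuple of distinct elements), and it is
equivariant: it commutes with the componentwise action of every permutation of `X`. -/
theorem stmt16 {X : Type*} [DecidableEq X] (n : ℕ) (hn : 1 ≤ n) :
    (∀ v w : List X, v.length = n → v.Nodup → w.length = 2 * n → w.Nodup →
      ((v.dedup ++ w.filter fun x => x ∉ v).take n = v)) ∧
    (∀ (π : Equiv.Perm X) (v w : List X),
      (((v.map ⇑π).dedup ++ (w.map ⇑π).filter fun x => x ∉ v.map ⇑π).take n)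
        = ((v.dedup ++ w.filter fun x => x ∉ v).take n).map ⇑π) := by
  constructor
  · intro v w hv hvnd _ _
    rw [List.Nodup.dedup hvnd, List.take_append_of_le_length (by omega),
      ← hv, List.take_length]
  · intro π v w
    have hd : (v.map ⇑π).dedup = v.dedup.map ⇑π :=
      (List.Nodup.dedup ((List.nodup_dedup v).map π.injective)).symm ▸
        List.dedup_map_of_injective π.injective v
    have hf : (w.map ⇑π).filter (fun x => decide (x ∉ v.map ⇑π))
        = (w.filter fun x => decide (x ∉ v)).map ⇑π := by
      rw [List.filter_map]
      congr 1
      apply List.filter_congr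
      intro x _
      by_cases h : x ∈ v <;> simp [h, π.injective.eq_iff]
      exact fun y hy hxy => h (hxy ▸ hy)
    rw [hd, hf, ← List.map_append, List.map_take]
end

section
/- For every nominal set X and every n, the restriction map r_X : X^{𝕍^n} → X^{𝕍^{n≠}}, sending a finitely supported function g : 𝕍^n → X to its restriction to tuples of distinct atoms, is surjective. -/
/-- The restriction map `r_X : X^{𝕍ⁿ} → X^{𝕍^{n≠}}` on finitely supported functions
(with the conjugation action `(π ⋆ f) y = π • f (π⁻¹ • y)`) is surjective: every finitely
supported function on tuples of distinct atoms extends to a finitely supported function on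
all tuples of atoms. -/
theorem stmt17 {𝕍 : Type*} [Infinite 𝕍] (n : ℕ) (X : Type*) [MulAction (FinPerm 𝕍) X]
    (f : DistinctTuples 𝕍 n → X)
    (hf : ∃ S : Finset 𝕍, ∀ π : FinPerm 𝕍, (∀ a ∈ S, π • a = a) →
      ∀ t : DistinctTuples 𝕍 n, π • f (π⁻¹ • t) = f t) :
    ∃ g : (Fin n → 𝕍) → X,
      (∃ S : Finset 𝕍, ∀ π : FinPerm 𝕍, (∀ a ∈ S, π • a = a) →
        ∀ v : Fin n → 𝕍, π • g (π⁻¹ • v) = g v) ∧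
      ∀ t : DistinctTuples 𝕍 n, g t.1 = f t := by
  classical
  obtain ⟨S, hS⟩ := hf
  -- a fixed tuple of distinct atoms
  set t₀ : DistinctTuples 𝕍 n :=
    ⟨fun i => Infinite.natEmbedding 𝕍 i.1,
     fun i j h => Fin.ext ((Infinite.natEmbedding 𝕍).injective h)⟩ with ht₀
  refine ⟨fun v => if h : Function.Injective v then f ⟨v, h⟩ else f t₀,
    ⟨S ∪ (Finset.univ.image t₀.1), ?_⟩, ?_⟩
  · intro π hπ v
    have hπS : ∀ a ∈ S, π • a = a := fun a ha => hπ a (Finset.mem_union_left _ ha)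
    have hπt₀ : ∀ i, π • t₀.1 i = t₀.1 i := fun i =>
      hπ _ (Finset.mem_union_right _ (Finset.mem_image.2 ⟨i, Finset.mem_univ i, rfl⟩))
    have hinj : Function.Injective (π⁻¹ • v) ↔ Function.Injective v := by
      constructor
      · intro h i j hij
        exact h (by show π⁻¹ • v i = π⁻¹ • v j; rw [hij])
      · intro h i j hij
        exact h (MulAction.injective π⁻¹ hij)
    by_cases h : Function.Injective v
    · simp only [dif_pos h, dif_pos (hinj.2 h)]
      have := hS π hπS ⟨v, h⟩
      convert this using 3
      exact Subtype.ext rfl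
    · simp only [dif_neg h, dif_neg (fun h' => h (hinj.1 h'))]
      have hfix : π⁻¹ • t₀ = t₀ := by
        apply Subtype.ext
        funext i
        show π⁻¹ • t₀.1 i = t₀.1 i
        rw [inv_smul_eq_iff, hπt₀ i]
      have := hS π hπS t₀
      rwa [hfix] at this
  · intro t
    simp only [dif_pos t.2]
end

section
/- Define F X = 𝕍 × X × (∐_{n ∈ ℕ} 𝕍^n × X^n) and the map q̄_X : FX × 𝕍 → X by q̄_X(a, d, v⃗, x⃗, b) = x_i where i is minimal with v_i = b, and q̄_X(a, d, v⃗, x⃗, b) = (a b)·d if no such i exists. Then the curried map q_X : FX → X^𝕍 is surjective: for any finitely supported f : 𝕍 → X, taking {v₁,…,vₙ} = supp(f) and a ∉ supp(f), one has q_X(a, f(a), v⃗, f(v⃗)) = f. -/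
/-- The transposition `(a b)` as an element of the group of finite permutations. -/
def swapFP (𝕍 : Type*) [DecidableEq 𝕍] (a b : 𝕍) : FinPerm 𝕍 :=
  ⟨Equiv.swap a b, by
    show {x | Equiv.swap a b x ≠ x}.Finite
    apply Set.Finite.subset ((Set.finite_singleton b).insert a)
    intro x hx
    simp only [Set.mem_setOf_eq] at hx
    rw [Set.mem_insert_iff, Set.mem_singleton_iff]
    by_contra h
    push_neg at h
    exact hx (Equiv.swap_apply_of_ne_of_ne h.1 h.2)⟩

open Classical in
/-- The map `q̄_X : FX × 𝕍 → X` for `FX = 𝕍 × X × ∐ₙ 𝕍ⁿ × Xⁿ`: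
`q̄ (a, d, v⃗, x⃗, b) = xᵢ` for the minimal `i` with `vᵢ = b`, and
`q̄ (a, d, v⃗, x⃗, b) = (a b) • d` if no such `i` exists. -/
noncomputable def qbar {𝕍 X : Type*} [DecidableEq 𝕍] [MulAction (FinPerm 𝕍) X]
    (a : 𝕍) (d : X) {n : ℕ} (v : Fin n → 𝕍) (x : Fin n → X) (b : 𝕍) : X :=
  if h : ∃ m : ℕ, ∃ hm : m < n, v ⟨m, hm⟩ = b then
    x ⟨Nat.find h, (Nat.find_spec h).1⟩
  else (swapFP 𝕍 a b) • d

/-- The curried map `q_X : FX → X^𝕍` is surjective: for every finitely supported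
`f : 𝕍 → X` with least support `S = {v₁, …, vₙ}` and any `a ∉ S`, one has
`q (a, f a, v⃗, f ∘ v⃗) = f`. -/
theorem stmt18 {𝕍 X : Type*} [DecidableEq 𝕍] [Infinite 𝕍] [MulAction (FinPerm 𝕍) X]
    (f : 𝕍 → X) (S : Finset 𝕍)
    (hS : ∀ π : FinPerm 𝕍, (∀ c ∈ S, π • c = c) → ∀ b : 𝕍, π • f (π⁻¹ • b) = f b)
    (hSmin : ∀ T : Finset 𝕍,
      (∀ π : FinPerm 𝕍, (∀ c ∈ T, π • c = c) → ∀ b : 𝕍, π • f (π⁻¹ • b) = f b) → S ⊆ T)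
    {n : ℕ} (v : Fin n → 𝕍) (hv : Function.Injective v)
    (hrange : Finset.image v Finset.univ = S)
    (a : 𝕍) (ha : a ∉ S) :
    ∀ b : 𝕍, qbar a (f a) v (f ∘ v) b = f b := by
  intro b
  unfold qbar
  split_ifs with h
  · exact congrArg f (Nat.find_spec h).2
  · have hb : b ∉ S := by
      rw [← hrange]
      simp only [Finset.mem_image]
      rintro ⟨i, -, hi⟩
      exact h ⟨i, i.isLt, by simpa using hi⟩
    have key := hS (swapFP 𝕍 a b) ?_ b
    · have hinv : (swapFP 𝕍 a b)⁻¹ • b = a := by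
        show ((Equiv.swap a b)⁻¹ : Equiv.Perm 𝕍) b = a
        simp [Equiv.swap_inv]
      rw [hinv] at key
      exact key
    · intro c hc
      show Equiv.swap a b c = c
      exact Equiv.swap_apply_of_ne_of_ne (fun e => ha (e ▸ hc)) (fun e => hb (e ▸ hc))
end
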